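/- Let k be a field of characteristic 2 and R = k[a,b,c,d]/(ad - bc - 1). The subalgebra generated by c and d, i.e. k[c,d] ⊆ R, is a polynomial ring: the map k[X,Y] → R, X ↦ c, Y ↦ d is injective. -/

import Mathlib

open MvPolynomial

noncomputable section

/-- The polynomial ring `k[a,b,c,d]` (variables indexed by `Fin 4`). -/
abbrev P (k : Type*) [Field k] := MvPolynomial (Fin 4) k

/-- The ideal `(ad - bc - 1)`. -/
def sl2Rel (k : Type*) [Field k] : Ideal (P k) :=
  Ideal.span {X 0 * X 3 - X 1 * X 2 - 1}

/-- `R = k[a,b,c,d]/(ad - bc - 1)`, the coordinate ring of `SL₂`. -/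
abbrev R (k : Type*) [Field k] := P k ⧸ sl2Rel k

def va (k : Type*) [Field k] : R k := Ideal.Quotient.mk _ (X 0)
def vb (k : Type*) [Field k] : R k := Ideal.Quotient.mk _ (X 1)
def vc (k : Type*) [Field k] : R k := Ideal.Quotient.mk _ (X 2)
def vd (k : Type*) [Field k] : R k := Ideal.Quotient.mk _ (X 3)

/-- The `k`-algebra map `k[X,Y] → R`, `X ↦ c`, `Y ↦ d`, is injective,
so `k[c,d] ⊆ R` is a polynomial ring in two variables. -/
theorem stmt14 (k : Type*) [Field k] [CharP k 2] :
    Function.Injective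
      (MvPolynomial.aeval (fun i : Fin 2 => if i = 0 then vc k else vd k) :
        MvPolynomial (Fin 2) k →ₐ[k] R k) := by
  set A := MvPolynomial (Fin 2) k
  set K := FractionRing A
  set ι : A →+* K := algebraMap A K with hι
  have hY : ι (X 1) ≠ 0 := by
    intro h
    have := (IsFractionRing.injective A K) (h.trans (map_zero ι).symm)
    exact MvPolynomial.X_ne_zero 1 this
  -- the retraction on P k
  set g : Fin 4 → K := ![(ι (X 1))⁻¹, 0, ι (X 0), ι (X 1)] with hg
  set f : P k →ₐ[k] K := MvPolynomial.aeval g with hf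
  have hrel : (MvPolynomial.X 0 * X 3 - X 1 * X 2 - 1 : P k) ∈ RingHom.ker f.toRingHom := by
    simp only [RingHom.mem_ker, AlgHom.toRingHom_eq_coe, RingHom.coe_coe, map_sub, map_mul,
      map_one, hf, aeval_X]
    simp only [hg, Matrix.cons_val_zero, Matrix.cons_val_one, Matrix.head_cons,
      Matrix.cons_val_two, Matrix.tail_cons, Matrix.cons_val_three]
    rw [inv_mul_cancel₀ hY]
    ring
  have hle : sl2Rel k ≤ RingHom.ker f.toRingHom := by
    rw [sl2Rel, Ideal.span_le, Set.singleton_subset_iff]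
    exact hrel
  set ψ : R k →ₐ[k] K := Ideal.Quotient.liftₐ (sl2Rel k) f hle with hψ
  have hcomp : (ψ.comp (MvPolynomial.aeval
      (fun i : Fin 2 => if i = 0 then vc k else vd k) : A →ₐ[k] R k)) =
      (IsScalarTower.toAlgHom k A K) := by
    apply MvPolynomial.algHom_ext
    intro i
    fin_cases i <;>
      simp [ψ, vc, vd, hf, hg, Ideal.Quotient.liftₐ_apply, Ideal.Quotient.lift_mk] <;>
      erw [Ideal.Quotient.lift_mk] <;> simp <;> rfl
  have hinj : Function.Injective (IsScalarTower.toAlgHom k A K) :=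
    IsFractionRing.injective A K
  intro p q hpq
  apply hinj
  rw [← hcomp]
  simp only [AlgHom.comp_apply, hpq]
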